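/- The set 𝒩 has cardinality at most (L − K + 1)N. -/

import Mathlib

/-- `rmod Γ x` is the representative of `x` modulo `Γ` in `[0, Γ)` (for `Γ > 0`). -/
noncomputable def rmod (Γ x : ℝ) : ℝ := x - Γ * (⌊x / Γ⌋ : ℝ)

lemma rmod_eq_self {Γ x : ℝ} (hΓ : 0 < Γ) (h0 : 0 ≤ x) (h1 : x < Γ) :
    rmod Γ x = x := by
  unfold rmod
  have hfl : ⌊x / Γ⌋ = 0 := by
    rw [Int.floor_eq_zero_iff]
    constructor
    · positivity
    · exact (div_lt_one hΓ).mpr h1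
  rw [hfl]
  simp

lemma rmod_add_int_mul {Γ x : ℝ} (hΓ : 0 < Γ) (k : ℤ) :
    rmod Γ (x + Γ * k) = rmod Γ x := by
  unfold rmod
  have hΓ' : Γ ≠ 0 := ne_of_gt hΓ
  have h : (x + Γ * k) / Γ = x / Γ + k := by field_simp
  rw [h, Int.floor_add_intCast]
  push_cast
  ring

open Classical in
/-- The set `𝒩` of indices `j` such that `|ℛ_j| ≤ ⌊(L−K)/2⌋` and the label of
`γ_j` is not in `ℛ_j` has cardinality at most `(L − K + 1)N`. -/
theorem card_N_le
    (N L K : ℕ) (hN : 1 ≤ N) (hK : 1 ≤ K) (hKL : K ≤ L)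
    (δ : ℝ) (hδ : 0 < δ) (Γ : ℝ) (hΓ : Γ = 4 * N * δ)
    (G B : Finset (Fin L)) (hGB : G ∪ B = Finset.univ) (hGBdisj : Disjoint G B)
    (hB : B.card ≤ (L - K) / 2)
    (rc : Fin N → ℝ) (hrc : ∀ i, 0 ≤ rc i ∧ rc i < Γ)
    (Δ : Fin N → Fin L → ℝ) (hΔ : ∀ i, ∀ l ∈ G, |Δ i l| < δ)
    (hΔdist : ∀ i, ∀ l ∈ G, ∀ l' ∈ G, Δ i l = Δ i l' → l = l')
    (tilde : Fin N → Fin L → ℝ)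
    (htilde : ∀ i l, tilde i l = rmod Γ (rc i + Δ i l))
    (hinj : Function.Injective (fun p : Fin N × Fin L => tilde p.1 p.2))
    (γ : Fin (N * L) → ℝ) (hγmono : StrictMono γ)
    (hγrange : ∀ j, ∃ i l, γ j = tilde i l)
    (lbl : Fin (N * L) → Fin L) (hlbl : ∀ j, ∃ i, γ j = tilde i (lbl j))
    (R : Fin (N * L) → Finset (Fin L))
    (hR : ∀ j l, l ∈ R j ↔
      ∃ i, 0 < rmod Γ (tilde i l - γ j) ∧ rmod Γ (tilde i l - γ j) ≤ 2 * δ) :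
    (Finset.univ.filter
        (fun j : Fin (N * L) =>
          (R j).card ≤ (L - K) / 2 ∧ lbl j ∉ R j)).card ≤ (L - K + 1) * N := by
  classical
  have hNR : (1 : ℝ) ≤ (N : ℝ) := by exact_mod_cast hN
  have hΓpos : 0 < Γ := by rw [hΓ]; nlinarith
  have h2δΓ : 2 * δ < Γ := by rw [hΓ]; nlinarith
  -- key: difference of two good residues of the same cluster
  have key : ∀ i, ∀ l ∈ G, ∀ l' ∈ G, Δ i l < Δ i l' →
      rmod Γ (tilde i l' - tilde i l) = Δ i l' - Δ i l := by
    intro i l hl l' hl' hlt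
    have h1 := hΔ i l hl
    have h2 := hΔ i l' hl'
    rw [abs_lt] at h1 h2
    have heq : tilde i l' - tilde i l
        = (Δ i l' - Δ i l) + Γ * ((⌊(rc i + Δ i l) / Γ⌋ - ⌊(rc i + Δ i l') / Γ⌋ : ℤ) : ℝ) := by
      rw [htilde, htilde]; unfold rmod; push_cast; ring
    rw [heq, rmod_add_int_mul hΓpos, rmod_eq_self hΓpos (by linarith) (by linarith)]
  -- the inverse map e
  have hinjγ : Function.Injective γ := hγmono.injective
  have hsurj : ∀ i l, ∃ j, γ j = tilde i l := by
    intro i l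
    have hcardT : (Finset.image (fun p : Fin N × Fin L => tilde p.1 p.2) Finset.univ).card
        = N * L := by
      rw [Finset.card_image_of_injective _ hinj]; simp
    have hsub : Finset.image γ Finset.univ
        ⊆ Finset.image (fun p : Fin N × Fin L => tilde p.1 p.2) Finset.univ := by
      intro x hx
      simp only [Finset.mem_image] at hx ⊢
      obtain ⟨j, _, rfl⟩ := hx
      obtain ⟨i', l', h⟩ := hγrange j
      exact ⟨(i', l'), Finset.mem_univ _, h.symm⟩
    have hcardγ : (Finset.image γ Finset.univ).card = N * L := by
      rw [Finset.card_image_of_injective _ hinjγ]; simp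
    have heqT : Finset.image γ Finset.univ
        = Finset.image (fun p : Fin N × Fin L => tilde p.1 p.2) Finset.univ :=
      Finset.eq_of_subset_of_card_le hsub (by rw [hcardT, hcardγ])
    have hmem : tilde i l ∈ Finset.image (fun p : Fin N × Fin L => tilde p.1 p.2) Finset.univ :=
      Finset.mem_image.mpr ⟨(i, l), Finset.mem_univ _, rfl⟩
    rw [← heqT] at hmem
    obtain ⟨j, _, hj⟩ := Finset.mem_image.mp hmem
    exact ⟨j, hj⟩
  choose e he using hsurj
  have heinj : ∀ i l i' l', e i l = e i' l' → (i, l) = (i', l') := by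
    intro i l i' l' h
    apply hinj
    show tilde i l = tilde i' l'
    rw [← he, ← he, h]
  have hlble : ∀ i l, lbl (e i l) = l := by
    intro i l
    obtain ⟨i', hi'⟩ := hlbl (e i l)
    have ht : tilde i' (lbl (e i l)) = tilde i l := by rw [← he i l, hi']
    have := hinj (a₁ := (i', lbl (e i l))) (a₂ := (i, l)) ht
    exact (Prod.ext_iff.mp this).2
  -- counting within clusters
  set F : ℕ := (L - K) / 2 with hF
  set f : Fin N → Fin L → ℕ :=
    fun i l => (G.filter (fun l' => Δ i l < Δ i l')).card with hf
  set S : Fin N → Finset (Fin L) :=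
    fun i => G.filter (fun l => F + 1 ≤ f i l) with hS
  have hmono : ∀ i, ∀ l₁ ∈ G, ∀ l₂ ∈ G, Δ i l₁ < Δ i l₂ → f i l₂ < f i l₁ := by
    intro i l₁ h₁ l₂ h₂ hlt
    apply Finset.card_lt_card
    rw [Finset.ssubset_iff_of_subset]
    · refine ⟨l₂, ?_, ?_⟩
      · exact Finset.mem_filter.mpr ⟨h₂, hlt⟩
      · intro hmem
        exact lt_irrefl _ (Finset.mem_filter.mp hmem).2
    · intro x hx
      rw [Finset.mem_filter] at hx ⊢
      exact ⟨hx.1, lt_trans hlt hx.2⟩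
  have hfinj : ∀ i, Set.InjOn (f i) G := by
    intro i l₁ hl₁ l₂ hl₂ hfe
    by_contra hne
    have hΔne : Δ i l₁ ≠ Δ i l₂ := fun h => hne (hΔdist i l₁ hl₁ l₂ hl₂ h)
    rcases lt_or_gt_of_ne hΔne with h | h
    · exact absurd hfe.symm (ne_of_lt (hmono i l₁ hl₁ l₂ hl₂ h))
    · exact absurd hfe (ne_of_lt (hmono i l₂ hl₂ l₁ hl₁ h))
  have hGLcard : G.card + B.card = L := by
    rw [← Finset.card_union_of_disjoint hGBdisj, hGB]
    simp
  have hScard : ∀ i, K - 1 ≤ (S i).card := by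
    intro i
    have hsplit := Finset.card_filter_add_card_filter_not
      (s := G) (p := fun l => F + 1 ≤ f i l)
    have hsmall : (G.filter (fun l => ¬ (F + 1 ≤ f i l))).card ≤ F + 1 := by
      have hmaps : ∀ l ∈ G.filter (fun l => ¬ (F + 1 ≤ f i l)), f i l ∈ Finset.range (F + 1) := by
        intro l hl
        rw [Finset.mem_range]
        have := (Finset.mem_filter.mp hl).2
        omega
      have hio : Set.InjOn (f i) (G.filter (fun l => ¬ (F + 1 ≤ f i l))) := by
        intro a ha b hb hab
        exact hfinj i (Finset.mem_of_mem_filter a ha) (Finset.mem_of_mem_filter b hb) hab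
      have := Finset.card_le_card_of_injOn (f i) hmaps hio
      simpa using this
    have hSi : (S i).card = (Finset.filter (fun l => F + 1 ≤ f i l) G).card := rfl
    have := hB
    omega
  -- good residues ahead contribute to R
  have hRcard : ∀ i, ∀ l ∈ G, f i l ≤ (R (e i l)).card := by
    intro i l hl
    apply Finset.card_le_card
    intro l' hl'
    obtain ⟨hl'G, hlt⟩ := Finset.mem_filter.mp hl'
    rw [hR]
    refine ⟨i, ?_, ?_⟩
    · have hk : rmod Γ (tilde i l' - γ (e i l)) = Δ i l' - Δ i l := by
        rw [he]; exact key i l hl l' hl'G hlt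
      rw [hk]; linarith
    · have hk : rmod Γ (tilde i l' - γ (e i l)) = Δ i l' - Δ i l := by
        rw [he]; exact key i l hl l' hl'G hlt
      have h1 := hΔ i l hl
      have h2 := hΔ i l' hl'G
      rw [abs_lt] at h1 h2
      rw [hk]; linarith
  have hC : ∀ i, ∀ l ∈ S i, ¬ ((R (e i l)).card ≤ F ∧ lbl (e i l) ∉ R (e i l)) := by
    intro i l hl
    obtain ⟨hlG, hfl⟩ := Finset.mem_filter.mp hl
    rintro ⟨hcard, -⟩
    have := hRcard i l hlG
    omega
  -- assemble
  set C : Finset (Fin (N * L)) := Finset.univ.filter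
    (fun j : Fin (N * L) => ¬ ((R j).card ≤ F ∧ lbl j ∉ R j)) with hCdef
  have hpart : (Finset.univ.filter
      (fun j : Fin (N * L) => (R j).card ≤ F ∧ lbl j ∉ R j)).card + C.card = N * L := by
    rw [hCdef, Finset.card_filter_add_card_filter_not]
    simp
  have hCge : (K - 1) * N ≤ C.card := by
    have h3 : (Finset.univ.sigma S).card ≤ C.card := by
      apply Finset.card_le_card_of_injOn (fun p => e p.1 p.2)
      · intro p hp
        rw [Finset.mem_coe, Finset.mem_sigma] at hp
        rw [hCdef, Finset.mem_coe, Finset.mem_filter]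
        exact ⟨Finset.mem_univ _, hC p.1 p.2 hp.2⟩
      · intro p hp q hq hpq
        have := heinj p.1 p.2 q.1 q.2 hpq
        obtain ⟨h1, h2⟩ := Prod.ext_iff.mp this
        exact Sigma.ext h1 (by cases p; cases q; cases h1; cases h2; rfl)
    have h1 : (Finset.univ.sigma S).card = ∑ i : Fin N, (S i).card := Finset.card_sigma _ _
    have h2 : (K - 1) * N ≤ ∑ i : Fin N, (S i).card := by
      calc (K - 1) * N = ∑ _i : Fin N, (K - 1) := by simp [mul_comm]
      _ ≤ ∑ i : Fin N, (S i).card := Finset.sum_le_sum (fun i _ => hScard i)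
    omega
  have hsum : (K - 1) * N + (L - K + 1) * N = N * L := by
    rw [← add_mul]
    have h : K - 1 + (L - K + 1) = L := by omega
    rw [h, mul_comm]
  linarith
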